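/- There are no nontrivial abelian complete groups: if A is a nontrivial abelian group, then there exists a group Y and a normal embedding A → Y which does not split. -/

import Mathlib

section Aux

variable (A : Type) [AddCommGroup A]

/-- The action of `ℤ` on an abelian group by inversion (the generator acts by negation). -/
noncomputable def myφ : Multiplicative ℤ →* MulAut (Multiplicative A) :=
  zpowersHom _ (MulEquiv.inv (Multiplicative A))

/-- The semidirect product `A ⋊ ℤ` with `ℤ` acting by inversion, as an additive group. -/
noncomputable def Y1 := Additive ((Multiplicative A) ⋊[myφ A] Multiplicative ℤ)

noncomputable instance : AddGroup (Y1 A) := by unfold Y1; infer_instance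

/-- The canonical embedding `A → A ⋊ ℤ`. -/
noncomputable def i1 : A →+ Y1 A where
  toFun a := Additive.ofMul (SemidirectProduct.inl (Multiplicative.ofAdd a))
  map_zero' := by simp; rfl
  map_add' x y := by simp [Multiplicative.ofAdd]; rfl

lemma i1_inj : Function.Injective (i1 A) := by
  intro x y hxy
  have := SemidirectProduct.inl_injective (φ := myφ A)
    (congrArg Additive.toMul hxy)
  exact congrArg Multiplicative.toAdd this

lemma mem_range_i1 (x : Y1 A) :
    x ∈ (i1 A).range ↔
      (Additive.toMul x : (Multiplicative A) ⋊[myφ A] Multiplicative ℤ).right = 1 := by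
  constructor
  · rintro ⟨b, rfl⟩
    exact SemidirectProduct.right_inl _
  · intro hx
    refine ⟨Multiplicative.toAdd
      (Additive.toMul x : (Multiplicative A) ⋊[myφ A] Multiplicative ℤ).left, ?_⟩
    have := SemidirectProduct.inl_left_mul_inr_right
      (Additive.toMul x : (Multiplicative A) ⋊[myφ A] Multiplicative ℤ)
    rw [hx] at this
    simp only [map_one, mul_one] at this
    exact congrArg Additive.ofMul this

lemma range_i1_normal : ((i1 A).range).Normal := by
  constructor
  intro n hn g
  rw [mem_range_i1] at hn ⊢
  show ((Additive.toMul g * Additive.toMul n * (Additive.toMul g)⁻¹ :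
      (Multiplicative A) ⋊[myφ A] Multiplicative ℤ)).right = 1
  rw [SemidirectProduct.mul_right, SemidirectProduct.mul_right, hn]
  simp

/-- The image in `A ⋊ ℤ` of the generator of `ℤ`. -/
noncomputable def t1 : Y1 A :=
  Additive.ofMul (SemidirectProduct.inr (Multiplicative.ofAdd (1:ℤ)))

lemma conj_i1 (a : A) : t1 A + i1 A a + -(t1 A) = i1 A (-a) := by
  show Additive.ofMul (SemidirectProduct.inr (Multiplicative.ofAdd (1:ℤ)) *
      SemidirectProduct.inl (Multiplicative.ofAdd a) *
      (SemidirectProduct.inr (Multiplicative.ofAdd (1:ℤ)))⁻¹ :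
      (Multiplicative A) ⋊[myφ A] Multiplicative ℤ) = _
  rw [← map_inv, ← SemidirectProduct.inl_aut]
  show _ = Additive.ofMul (SemidirectProduct.inl (Multiplicative.ofAdd (-a)) :
      (Multiplicative A) ⋊[myφ A] Multiplicative ℤ)
  congr 1

variable (a : A)

/-- The subgroup of `ZMod 4 × A` generated by `(2, a)`. -/
def N2 : AddSubgroup (ZMod 4 × A) := AddSubgroup.zmultiples ((2 : ZMod 4), a)

/-- The pushout of `ℤ/2 → A`, `x ↦ a`, along `ℤ/2 → ℤ/4`. -/
def Y2 := (ZMod 4 × A) ⧸ N2 A a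

instance : AddCommGroup (Y2 A a) := by unfold Y2; infer_instance

/-- The canonical map `A → Y2`. -/
def i2 : A →+ Y2 A a :=
  (QuotientAddGroup.mk' (N2 A a)).comp (AddMonoidHom.inr (ZMod 4) A)

lemma i2_inj (h2 : ∀ x : A, x + x = 0) : Function.Injective (i2 A a) := by
  rw [injective_iff_map_eq_zero]
  intro x hx
  have hmem : ((0 : ZMod 4), x) ∈ N2 A a := (QuotientAddGroup.eq_zero_iff _).mp hx
  obtain ⟨n, hn⟩ := AddSubgroup.mem_zmultiples_iff.mp hmem
  rw [Prod.ext_iff] at hn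
  obtain ⟨h1, hA⟩ := hn
  simp only [Prod.smul_fst, Prod.smul_snd] at h1 hA
  have h4 : ((2 * n : ℤ) : ZMod 4) = 0 := by
    push_cast
    rw [← h1, zsmul_eq_mul]
    ring
  obtain ⟨m, hm⟩ := (ZMod.intCast_zmod_eq_zero_iff_dvd _ 4).mp h4
  norm_num at hm
  have hn2 : n = 2 * m := by linarith
  rw [← hA, hn2, mul_comm, mul_smul, two_zsmul, h2, smul_zero]

lemma i2_not_split (h2 : ∀ x : A, x + x = 0) (ha : a ≠ 0)
    (r : Y2 A a →+ A) (hr : r.comp (i2 A a) = AddMonoidHom.id A) : False := by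
  have hra : r (i2 A a a) = a := DFunLike.congr_fun hr a
  have hneg : -a = a := neg_eq_of_add_eq_zero_left (h2 a)
  have key : (QuotientAddGroup.mk ((1 : ZMod 4), (0:A)) : Y2 A a)
      + QuotientAddGroup.mk ((1 : ZMod 4), (0:A)) = i2 A a a := by
    show QuotientAddGroup.mk _ = QuotientAddGroup.mk _
    rw [QuotientAddGroup.eq_iff_sub_mem]
    have hsub : (((1:ZMod 4),(0:A)) + ((1:ZMod 4),(0:A))) - ((0:ZMod 4), a)
        = ((2 : ZMod 4), a) := by
      rw [Prod.ext_iff]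
      constructor
      · norm_num
      · simp [hneg]
    have hmem : ((1:ZMod 4),(0:A)) + ((1:ZMod 4),(0:A)) - ((0:ZMod 4), a) ∈ N2 A a := by
      rw [hsub]; exact AddSubgroup.mem_zmultiples _
    exact hmem
  have hfin : r (QuotientAddGroup.mk ((1:ZMod 4),(0:A)))
      + r (QuotientAddGroup.mk ((1:ZMod 4),(0:A))) = a := by
    have := congrArg r key
    exact (map_add r _ _).symm.trans (this.trans hra)
  rw [h2] at hfin
  exact ha hfin.symm

end Aux

/-- There are no nontrivial abelian complete groups: if `A` is a nontrivial
abelian group then it is not the case that every normal embedding of `A`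
into a group splits. -/
theorem stmt_6 (A : Type) [AddCommGroup A] [Nontrivial A] :
    ¬ (∀ (Y : Type) [AddGroup Y] (i : A →+ Y), Function.Injective i →
        (AddMonoidHom.range i).Normal →
        ∃ r : Y →+ A, r.comp i = AddMonoidHom.id A) := by
  intro h
  by_cases h2 : ∀ x : A, x + x = 0
  · -- exponent 2 case: embed `A` into the pushout with `ℤ/4`
    obtain ⟨a, ha⟩ := exists_ne (0 : A)
    obtain ⟨r, hr⟩ := h (Y2 A a) (i2 A a) (i2_inj A a h2) inferInstance
    exact i2_not_split A a h2 ha r hr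
  · -- otherwise: embed `A` into `A ⋊ ℤ` with `ℤ` acting by negation
    push_neg at h2
    obtain ⟨a, ha⟩ := h2
    obtain ⟨r, hr⟩ := h (Y1 A) (i1 A) (i1_inj A) (range_i1_normal A)
    have h1 : r (t1 A + i1 A a + -(t1 A)) = r (i1 A (-a)) := by rw [conj_i1]
    have hri : ∀ x : A, r (i1 A x) = x := fun x => DFunLike.congr_fun hr x
    rw [map_add, map_add, map_neg, hri, hri, add_comm (r (t1 A)) a, add_assoc,
      add_neg_cancel, add_zero] at h1
    exact ha (neg_eq_iff_add_eq_zero.mp h1.symm)
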